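/- Let λ > 0, η > 0, and for each y ∈ ℕ define W(y|x) = (e^{-x/λ}/(1+λ)) (λ/(1+λ))^y ∑_{j=0}^∞ (x/(λ(1+λ)))^j (y+j)!/((j!)^2 y!). If the input X has exponential density Q_E(x) = (1/η) e^{-x/η} on [0,∞), then the output distribution R_G(y) = ∫_0^∞ W(y|x) Q_E(x) dx equals the geometric (Bose–Einstein) distribution R_G(y) = (1/(1+λ+η)) ((η+λ)/(1+λ+η))^y. -/

import Mathlib

open Real MeasureTheory


/-- The Laguerre channel transition pmf `W(y|x)` with noise parameter `lam`. -/
noncomputable def laguerreW (lam x : ℝ) (y : ℕ) : ℝ :=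
  Real.exp (-x / lam) / (1 + lam) * (lam / (1 + lam)) ^ y *
    ∑' j : ℕ, (x / (lam * (1 + lam))) ^ j *
      ((y + j).factorial : ℝ) / ((j.factorial : ℝ) ^ 2 * (y.factorial : ℝ))

lemma aux_integrable (c : ℝ) (hc : 0 < c) (j : ℕ) :
    IntegrableOn (fun x : ℝ => x ^ j * Real.exp (-(c * x))) (Set.Ioi 0) := by
  have h := integrableOn_rpow_mul_exp_neg_mul_rpow (s := (j : ℝ)) (p := 1)
    (lt_of_lt_of_le neg_one_lt_zero (Nat.cast_nonneg j)) zero_lt_one hc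
  refine h.congr_fun (fun x hx => ?_) measurableSet_Ioi
  dsimp only
  rw [Real.rpow_one, Real.rpow_natCast, neg_mul]

lemma aux_integral (c : ℝ) (hc : 0 < c) (j : ℕ) :
    ∫ x in Set.Ioi (0:ℝ), x ^ j * Real.exp (-(c * x)) =
      (j.factorial : ℝ) * (1 / c) ^ (j + 1) := by
  have h := Real.integral_rpow_mul_exp_neg_mul_Ioi
    (a := (j : ℝ) + 1) (by positivity) hc
  rw [show ((j : ℝ) + 1) - 1 = (j : ℝ) by ring] at h
  calc ∫ x in Set.Ioi (0:ℝ), x ^ j * Real.exp (-(c * x))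
      = ∫ x in Set.Ioi (0:ℝ), x ^ ((j : ℝ)) * Real.exp (-(c * x)) :=
        setIntegral_congr_fun measurableSet_Ioi (fun x _ => by
          rw [Real.rpow_natCast])
    _ = (1 / c) ^ ((j : ℝ) + 1) * Real.Gamma ((j : ℝ) + 1) := h
    _ = (j.factorial : ℝ) * (1 / c) ^ (j + 1) := by
        rw [Real.Gamma_nat_eq_factorial,
          show ((j : ℝ) + 1) = ((j + 1 : ℕ) : ℝ) by push_cast; ring,
          Real.rpow_natCast, mul_comm]

theorem laguerre_exponential_input_gives_geometric_output
    (lam η : ℝ) (hlam : 0 < lam) (hη : 0 < η) (y : ℕ) :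
    ∫ x in Set.Ioi (0:ℝ), laguerreW lam x y * ((1 / η) * Real.exp (-x / η)) =
      (1 / (1 + lam + η)) * ((η + lam) / (1 + lam + η)) ^ y := by
  have h1l : (0:ℝ) < 1 + lam := by linarith
  set a : ℝ := 1 / (lam * (1 + lam)) with ha_def
  set c : ℝ := 1 / lam + 1 / η with hc_def
  have ha : 0 < a := by positivity
  have hc : 0 < c := by positivity
  set K : ℝ := (lam / (1 + lam)) ^ y / ((1 + lam) * η) with hK_def
  have hK : 0 < K := by positivity
  set t : ℝ := a / c with ht_def
  have htpos : 0 < t := by positivity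
  have ht1 : t < 1 := by
    have h1 : a ≤ 1 / lam := by
      rw [ha_def]
      apply one_div_le_one_div_of_le hlam
      nlinarith
    have h2 : 0 < 1 / η := by positivity
    have h3 : a < c := by rw [hc_def]; linarith
    rw [ht_def, div_lt_one hc]
    exact h3
  have ht : ‖t‖ < 1 := by rw [Real.norm_eq_abs, abs_of_pos htpos]; exact ht1
  clear_value t K c a
  set F : ℕ → ℝ → ℝ := fun j x =>
    K * (((y + j).factorial : ℝ) / ((j.factorial : ℝ) ^ 2 * (y.factorial : ℝ))) *
      a ^ j * (x ^ j * Real.exp (-(c * x))) with hF_def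
  -- Step A: pointwise identity of integrands
  have hA : ∀ x : ℝ, laguerreW lam x y * ((1 / η) * Real.exp (-x / η)) = ∑' j, F j x := by
    intro x
    have hx1 : Real.exp (-x / lam) * Real.exp (-x / η) = Real.exp (-(c * x)) := by
      rw [← Real.exp_add]
      congr 1
      rw [hc_def]
      field_simp
      ring
    have hx2 : x / (lam * (1 + lam)) = a * x := by
      rw [ha_def, one_div, inv_mul_eq_div]
    rw [laguerreW, mul_assoc, mul_assoc, ← tsum_mul_right, ← tsum_mul_left, ← tsum_mul_left]
    apply tsum_congr
    intro j
    simp only [hF_def]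
    rw [hx2, mul_pow, ← hx1, hK_def, div_mul_eq_div_div ((lam / (1 + lam)) ^ y) (1 + lam) η]
    ring
  -- integrability of each F j
  have hFint : ∀ j, Integrable (F j) (volume.restrict (Set.Ioi 0)) := by
    intro j
    exact (aux_integrable c hc j).const_mul _
  -- value of each integral
  have key : ∀ j, ∫ x in Set.Ioi (0:ℝ), F j x =
      (K / c) * (((j + y).choose y : ℝ) * t ^ j) := by
    intro j
    have hcast : ((y + j).factorial : ℝ) =
        ((j + y).choose y : ℝ) * (j.factorial : ℝ) * (y.factorial : ℝ) := by
      have h := Nat.choose_mul_factorial_mul_factorial (Nat.le_add_left y j)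
      rw [Nat.add_sub_cancel] at h
      rw [add_comm y j, ← h]
      push_cast
      ring
    rw [hF_def]
    simp only
    rw [MeasureTheory.integral_const_mul, aux_integral c hc j, hcast, ht_def, div_pow a c j, pow_succ (1 / c) j]
    have hjf : (j.factorial : ℝ) ≠ 0 := Nat.cast_ne_zero.mpr j.factorial_ne_zero
    have hyf : (y.factorial : ℝ) ≠ 0 := Nat.cast_ne_zero.mpr y.factorial_ne_zero
    have h1 : ((((j + y).choose y : ℝ) * (j.factorial : ℝ) * (y.factorial : ℝ)) /
        ((j.factorial : ℝ) ^ 2 * (y.factorial : ℝ))) * (j.factorial : ℝ) =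
        (((j + y).choose y : ℝ)) := by
      field_simp
    calc K * (((j + y).choose y : ℝ) * (j.factorial : ℝ) * (y.factorial : ℝ) /
            ((j.factorial : ℝ) ^ 2 * (y.factorial : ℝ))) * a ^ j *
          ((j.factorial : ℝ) * ((1 / c) ^ j * (1 / c)))
        = (((((j + y).choose y : ℝ) * (j.factorial : ℝ) * (y.factorial : ℝ)) /
            ((j.factorial : ℝ) ^ 2 * (y.factorial : ℝ))) * (j.factorial : ℝ)) *
            (K * a ^ j * ((1 / c) ^ j * (1 / c))) := by ring
      _ = (((j + y).choose y : ℝ)) * (K * a ^ j * ((1 / c) ^ j * (1 / c))) := by rw [h1]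
      _ = K / c * (((j + y).choose y : ℝ) * (a ^ j / c ^ j)) := by
          rw [one_div, inv_pow, div_eq_mul_inv, div_eq_mul_inv]
          ring
  -- nonnegativity / norm removal
  have hFnorm : ∀ j, ∫ x in Set.Ioi (0:ℝ), ‖F j x‖ =
      (K / c) * (((j + y).choose y : ℝ) * t ^ j) := by
    intro j
    rw [← key j]
    apply setIntegral_congr_fun measurableSet_Ioi
    intro x hx
    dsimp only
    rw [Real.norm_of_nonneg]
    rw [hF_def]
    simp only
    have hx0 : (0:ℝ) ≤ x := (le_of_lt hx)
    positivity
  have hsum : Summable fun j => ∫ x in Set.Ioi (0:ℝ), ‖F j x‖ := by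
    simp_rw [hFnorm]
    exact (summable_choose_mul_geometric_of_norm_lt_one y ht).mul_left _
  -- interchange
  have hswap := MeasureTheory.integral_tsum_of_summable_integral_norm hFint hsum
  calc ∫ x in Set.Ioi (0:ℝ), laguerreW lam x y * ((1 / η) * Real.exp (-x / η))
      = ∫ x in Set.Ioi (0:ℝ), ∑' j, F j x := by
        exact setIntegral_congr_fun measurableSet_Ioi (fun x _ => hA x)
    _ = ∑' j, ∫ x in Set.Ioi (0:ℝ), F j x := hswap.symm
    _ = ∑' j, (K / c) * (((j + y).choose y : ℝ) * t ^ j) := tsum_congr key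
    _ = (K / c) * (1 / (1 - t) ^ (y + 1)) := by
        rw [tsum_mul_left, tsum_choose_mul_geometric_of_norm_lt_one y ht]
    _ = (1 / (1 + lam + η)) * ((η + lam) / (1 + lam + η)) ^ y := by
        have h1t : (0:ℝ) < 1 - t := by linarith
        have hts : 1 - t = (lam * (1 + lam + η)) / ((1 + lam) * (lam + η)) := by
          rw [ht_def, ha_def, hc_def]
          field_simp
          ring
        have hlη : (0:ℝ) < 1 + lam + η := by linarith
        have e1 : (lam / (1 + lam)) / (1 - t) = (η + lam) / (1 + lam + η) := by
          rw [hts]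
          field_simp
          ring
        have e2 : (1 + lam) * η * c * (1 - t) = 1 + lam + η := by
          rw [hts, hc_def]
          field_simp
          ring
        have hu : (1 - t) ≠ 0 := ne_of_gt h1t
        have hc0 : c ≠ 0 := ne_of_gt hc
        have hη0 : η ≠ 0 := ne_of_gt hη
        have h1l0 : (1 + lam) ≠ 0 := ne_of_gt h1l
        calc (K / c) * (1 / (1 - t) ^ (y + 1))
            = ((lam / (1 + lam)) / (1 - t)) ^ y * (1 / ((1 + lam) * η * c * (1 - t))) := by
              rw [hK_def, div_pow, div_pow, pow_succ]
              field_simp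
              have hpow : (1 + lam)⁻¹ ^ y * (1 + lam) ^ y = 1 := by
                rw [inv_pow]; exact inv_mul_cancel₀ (pow_ne_zero _ h1l0)
              linear_combination (-lam ^ y) * hpow
          _ = (1 / (1 + lam + η)) * ((η + lam) / (1 + lam + η)) ^ y := by
              rw [e1, e2]; ring
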